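/- Let (Ω, ℱ, ℙ) be a probability space, let n ≥ 2 be an integer, and let A be a real number with 0 < A ≤ n². Let ε and c be real numbers with 0 < ε < c, and let k be a natural number with (k : ℝ) = ε·(n²(n−1)/A)^{2/3}. Let Y_1, …, Y_k be real-valued square-integrable random variables on Ω, each with mean E[Y_i] = A/(n(n−1)) and variance Var[Y_i] = (n(n−1)−1)·A²/(n²(n−1)²·(n(n−1)+1)). Then ℙ[ Σ_{i=1}^k Y_i ≥ c·n ] ≤ ε³/(c − ε)². -/

import Mathlib

open MeasureTheory ProbabilityTheory
open scoped ENNReal NNReal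

lemma evar_sq {Ω : Type*} {m : MeasurableSpace Ω} (X : Ω → ℝ) (μ : Measure Ω) :
    evariance X μ = eLpNorm (fun ω => X ω - μ[X]) 2 μ ^ 2 := by
  rw [eLpNorm_eq_lintegral_rpow_enorm_toReal two_ne_zero ENNReal.ofNat_ne_top,
    ← ENNReal.rpow_natCast _ 2, ← ENNReal.rpow_mul]
  norm_num
  rfl

lemma variance_sum_le' {Ω : Type*} {m : MeasurableSpace Ω} {μ : Measure Ω}
    [IsProbabilityMeasure μ] {k : ℕ} (Y : Fin k → Ω → ℝ)
    (hL2 : ∀ i, MemLp (Y i) 2 μ) {v : ℝ} (hv0 : 0 ≤ v)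
    (hv : ∀ i, variance (Y i) μ ≤ v) :
    variance (∑ i, Y i) μ ≤ (k : ℝ) ^ 2 * v := by
  have hS : MemLp (∑ i, Y i) 2 μ := memLp_finset_sum' _ (fun i _ => hL2 i)
  set b : ℝ≥0∞ := ENNReal.ofReal v with hb
  -- each centered norm bounded
  have hC : ∀ i, eLpNorm (fun ω => Y i ω - μ[Y i]) 2 μ ≤ b ^ ((1:ℝ)/2) := by
    intro i
    have h1 : evariance (Y i) μ ≤ b := by
      rw [← (hL2 i).ofReal_variance_eq]
      exact ENNReal.ofReal_le_ofReal (hv i)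
    rw [evar_sq] at h1
    have := ENNReal.rpow_le_rpow h1 (by norm_num : (0:ℝ) ≤ 1/2)
    rwa [← ENNReal.rpow_natCast _ 2, ← ENNReal.rpow_mul, (by norm_num : ((2:ℕ):ℝ) * (1/2) = 1),
      ENNReal.rpow_one] at this
  -- the centered sum
  have hES : (∫ x, (∑ i, Y i x) ∂μ) = ∑ i, μ[Y i] :=
    integral_finset_sum _ (fun i _ => ((hL2 i).integrable one_le_two))
  have hdecomp : (fun ω => (∑ i, Y i) ω - μ[∑ i, Y i]) =
      ∑ i, (fun ω => Y i ω - μ[Y i]) := by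
    funext ω
    simp only [Finset.sum_apply]
    rw [hES, Finset.sum_sub_distrib]
  have hsum : eLpNorm (fun ω => (∑ i, Y i) ω - μ[∑ i, Y i]) 2 μ ≤ (k : ℝ≥0∞) * b ^ ((1:ℝ)/2) := by
    rw [hdecomp]
    calc eLpNorm (∑ i, fun ω => Y i ω - μ[Y i]) 2 μ
        ≤ ∑ i : Fin k, eLpNorm (fun ω => Y i ω - μ[Y i]) 2 μ :=
          eLpNorm_sum_le (fun i _ => ((hL2 i).sub (memLp_const _)).aestronglyMeasurable)
            one_le_two
      _ ≤ ∑ _i : Fin k, b ^ ((1:ℝ)/2) := Finset.sum_le_sum (fun i _ => hC i)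
      _ = (k : ℝ≥0∞) * b ^ ((1:ℝ)/2) := by simp [mul_comm]
  have hev : evariance (∑ i, Y i) μ ≤ (k : ℝ≥0∞) ^ 2 * b := by
    rw [evar_sq]
    calc eLpNorm (fun ω => (∑ i, Y i) ω - μ[∑ i, Y i]) 2 μ ^ 2
        ≤ ((k : ℝ≥0∞) * b ^ ((1:ℝ)/2)) ^ 2 := pow_le_pow_left' hsum 2
      _ = (k : ℝ≥0∞) ^ 2 * b := by
          rw [mul_pow, ← ENNReal.rpow_natCast (b ^ ((1:ℝ)/2)) 2, ← ENNReal.rpow_mul]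
          norm_num
  have : evariance (∑ i, Y i) μ ≤ ENNReal.ofReal ((k : ℝ) ^ 2 * v) := by
    rwa [ENNReal.ofReal_mul (by positivity), ENNReal.ofReal_pow (by positivity),
      ENNReal.ofReal_natCast]
  exact ENNReal.toReal_le_of_le_ofReal (by positivity) this

set_option maxHeartbeats 1000000 in
theorem early_termination_probability_pairs
    {Ω : Type*} [MeasureSpace Ω] [IsProbabilityMeasure (ℙ : Measure Ω)]
    (n : ℕ) (hn : 2 ≤ n) (A : ℝ) (hA0 : 0 < A) (hA : A ≤ (n : ℝ) ^ 2)
    (ε c : ℝ) (hε : 0 < ε) (hεc : ε < c)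
    (k : ℕ) (hk : (k : ℝ) = ε * ((n : ℝ) ^ 2 * ((n : ℝ) - 1) / A) ^ ((2 : ℝ) / 3))
    (Y : Fin k → Ω → ℝ)
    (hmeas : ∀ i, Measurable (Y i))
    (hL2 : ∀ i, MemLp (Y i) 2 ℙ)
    (hmean : ∀ i, (∫ ω, Y i ω ∂ℙ) = A / ((n : ℝ) * ((n : ℝ) - 1)))
    (hvar : ∀ i, variance (Y i) ℙ =
      ((n : ℝ) * ((n : ℝ) - 1) - 1) * A ^ 2 /
        ((n : ℝ) ^ 2 * ((n : ℝ) - 1) ^ 2 * ((n : ℝ) * ((n : ℝ) - 1) + 1))) :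
    ℙ {ω | c * n ≤ ∑ i, Y i ω} ≤ ENNReal.ofReal (ε ^ 3 / (c - ε) ^ 2) := by
  have hN2 : (2:ℝ) ≤ (n:ℝ) := by exact_mod_cast hn
  have hN1 : (1:ℝ) ≤ (n:ℝ) - 1 := by linarith
  have hNpos : (0:ℝ) < (n:ℝ) := by linarith
  have hc0 : 0 < c := hε.trans hεc
  set x : ℝ := (n:ℝ)^2 * ((n:ℝ)-1) / A with hxdef
  have hx1 : 1 ≤ x := by
    rw [hxdef, le_div_iff₀ hA0]
    nlinarith
  have hx0 : (0:ℝ) < x := lt_of_lt_of_le one_pos hx1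
  rcases Nat.eq_zero_or_pos k with hk0 | hkpos
  · subst hk0
    have hset : {ω : Ω | c * (n:ℝ) ≤ ∑ i : Fin 0, Y i ω} = ∅ := by
      ext ω
      simp only [Finset.univ_eq_empty, Finset.sum_empty, Set.mem_setOf_eq,
        Set.mem_empty_iff_false, iff_false, not_le]
      positivity
    rw [hset]
    simp
  -- main case
  have hk1 : (1:ℝ) ≤ (k:ℝ) := by exact_mod_cast hkpos
  set t : ℝ := x ^ ((1:ℝ)/3) with htdef
  have ht0 : 0 < t := Real.rpow_pos_of_pos hx0 _
  have ht1 : 1 ≤ t := Real.one_le_rpow hx1 (by norm_num)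
  have ht3 : t ^ 3 = x := by
    rw [htdef, ← Real.rpow_natCast (x ^ ((1:ℝ)/3)) 3, ← Real.rpow_mul hx0.le]
    norm_num
  have ht2 : x ^ ((2:ℝ)/3) = t ^ 2 := by
    rw [htdef, ← Real.rpow_natCast (x ^ ((1:ℝ)/3)) 2, ← Real.rpow_mul hx0.le]
    norm_num
  have hkt : (k:ℝ) = ε * t ^ 2 := by rw [hk, ht2]
  have h1εt : 1 ≤ ε * t ^ 2 := hkt ▸ hk1
  have hne : (n:ℝ) ≠ 0 := hNpos.ne'
  have hne1 : (n:ℝ) - 1 ≠ 0 := by linarith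
  have hμY : A / ((n:ℝ) * ((n:ℝ)-1)) = (n:ℝ) / t ^ 3 := by
    rw [ht3, hxdef]
    field_simp
  set v : ℝ := (A / ((n:ℝ) * ((n:ℝ)-1)))^2 with hvdef
  have hv0 : 0 ≤ v := sq_nonneg _
  have hvle : ∀ i, variance (Y i) ℙ ≤ v := by
    intro i
    rw [hvar i, hvdef, div_pow, div_le_div_iff₀ (by positivity) (by positivity)]
    nlinarith [sq_nonneg A, sq_nonneg ((n:ℝ)*((n:ℝ)-1)), mul_pos hNpos (by linarith : (0:ℝ) < (n:ℝ)-1)]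
  have hS : MemLp (∑ i, Y i) 2 ℙ := memLp_finset_sum' _ (fun i _ => hL2 i)
  have hES : (ℙ : Measure Ω)[∑ i, Y i] = (k:ℝ) * (A / ((n:ℝ) * ((n:ℝ)-1))) := by
    have : ((∑ i, Y i) : Ω → ℝ) = (fun ω => ∑ i, Y i ω) := by
      funext ω; simp [Finset.sum_apply]
    rw [this, integral_finset_sum _ (fun i _ => ((hL2 i).integrable one_le_two))]
    simp [hmean, Finset.sum_const, Finset.card_univ]
  have hESle : (k:ℝ) * (A / ((n:ℝ) * ((n:ℝ)-1))) ≤ ε * (n:ℝ) := by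
    rw [hkt, hμY]
    have heq : ε * t ^ 2 * ((n:ℝ) / t ^ 3) = ε * (n:ℝ) / t := by
      field_simp
    rw [heq, div_le_iff₀ ht0]
    nlinarith [mul_nonneg hε.le hNpos.le]
  have hsub : {ω : Ω | c * (n:ℝ) ≤ ∑ i, Y i ω} ⊆
      {ω : Ω | (c - ε) * (n:ℝ) ≤ |(∑ i, Y i) ω - (ℙ : Measure Ω)[∑ i, Y i]|} := by
    intro ω hω
    simp only [Set.mem_setOf_eq] at hω ⊢
    have hSω : (∑ i, Y i) ω = ∑ i, Y i ω := by simp [Finset.sum_apply]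
    have h1 : (c - ε) * (n:ℝ) ≤ (∑ i, Y i) ω - (ℙ : Measure Ω)[∑ i, Y i] := by
      rw [hSω, hES]
      have hring : (c - ε) * (n:ℝ) = c * (n:ℝ) - ε * (n:ℝ) := by ring
      linarith [hESle, hω]
    exact h1.trans (le_abs_self _)
  have hvarS : variance (∑ i, Y i) ℙ ≤ (k:ℝ)^2 * v :=
    variance_sum_le' Y hL2 hv0 hvle
  have hkv : (k:ℝ)^2 * v ≤ ε^3 * (n:ℝ)^2 := by
    have heq : (k:ℝ)^2 * v = ε^2 * (n:ℝ)^2 / t^2 := by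
      rw [hkt, hvdef, hμY]
      field_simp
    rw [heq, div_le_iff₀ (by positivity)]
    nlinarith [mul_le_mul_of_nonneg_left h1εt (by positivity : (0:ℝ) ≤ ε^2 * (n:ℝ)^2)]
  have hcn : 0 < (c - ε) * (n:ℝ) := by
    have : 0 < c - ε := by linarith
    positivity
  calc ℙ {ω | c * (n:ℝ) ≤ ∑ i, Y i ω}
      ≤ ℙ {ω : Ω | (c - ε) * (n:ℝ) ≤ |(∑ i, Y i) ω - (ℙ : Measure Ω)[∑ i, Y i]|} :=
        measure_mono hsub
    _ ≤ ENNReal.ofReal (variance (∑ i, Y i) ℙ / ((c - ε) * (n:ℝ))^2) :=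
        meas_ge_le_variance_div_sq hS hcn
    _ ≤ ENNReal.ofReal (ε ^ 3 / (c - ε) ^ 2) := by
        apply ENNReal.ofReal_le_ofReal
        rw [div_le_div_iff₀ (pow_pos hcn 2) (pow_pos (by linarith : (0:ℝ) < c - ε) 2)]
        have h1 : variance (∑ i, Y i) ℙ ≤ ε^3 * (n:ℝ)^2 := hvarS.trans hkv
        nlinarith [sq_nonneg ((c-ε) * (n:ℝ)), sq_nonneg (c-ε)]
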